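/- Let λ = λ₂/λ₁ with λ₁, λ₂ > 0. For any (a,b) ∈ C₂(x*,v*) and any fixed g ∈ R^n, h ∈ R^m, ⟨a,g⟩ + ⟨b,h⟩ ≤ ‖a‖₂·dist(g, λ₁·∂f(x*)) + ‖b‖₂·dist(h, λ₂·∂g(v*)). -/

import Mathlib

open scoped RealInnerProductSpace Pointwise

/-- Subdifferential of `f` at `x`. -/
def subdiffE {n : ℕ} (f : EuclideanSpace ℝ (Fin n) → ℝ) (x : EuclideanSpace ℝ (Fin n)) :
    Set (EuclideanSpace ℝ (Fin n)) :=
  {u | ∀ d : EuclideanSpace ℝ (Fin n), f (x + d) ≥ f x + ⟪u, d⟫}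

/-- for any `(a,b) ∈ C₂(x*,v*)` (with `λ = l₂/l₁`) and any fixed
`g ∈ ℝ^n`, `h ∈ ℝ^m`,
`⟨a,g⟩ + ⟨b,h⟩ ≤ ‖a‖₂·dist(g, l₁·∂f(x*)) + ‖b‖₂·dist(h, l₂·∂g(v*))`. -/
theorem cone_two_inner_product_bound {n m : ℕ}
    (f : EuclideanSpace ℝ (Fin n) → ℝ) (g : EuclideanSpace ℝ (Fin m) → ℝ)
    (hf : ConvexOn ℝ Set.univ f) (hg : ConvexOn ℝ Set.univ g)
    (xs : EuclideanSpace ℝ (Fin n)) (vs : EuclideanSpace ℝ (Fin m))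
    (hfne : (subdiffE f xs).Nonempty) (hfc : IsCompact (subdiffE f xs))
    (hgne : (subdiffE g vs).Nonempty) (hgc : IsCompact (subdiffE g vs))
    (l₁ l₂ : ℝ) (hl₁ : 0 < l₁) (hl₂ : 0 < l₂)
    (a : EuclideanSpace ℝ (Fin n)) (b : EuclideanSpace ℝ (Fin m))
    (hab : ∀ u ∈ subdiffE f xs, ∀ s ∈ subdiffE g vs,
      ⟪a, u⟫ + (l₂ / l₁) * ⟪b, s⟫ ≤ 0)
    (gv : EuclideanSpace ℝ (Fin n)) (hv : EuclideanSpace ℝ (Fin m)) :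
    ⟪a, gv⟫ + ⟪b, hv⟫ ≤
      ‖a‖ * Metric.infDist gv (l₁ • subdiffE f xs) +
      ‖b‖ * Metric.infDist hv (l₂ • subdiffE g vs) := by
  have hfc' : IsCompact (l₁ • subdiffE f xs) := hfc.smul l₁
  have hgc' : IsCompact (l₂ • subdiffE g vs) := hgc.smul l₂
  obtain ⟨p, hp, hpd⟩ := hfc'.exists_infDist_eq_dist (hfne.smul_set) gv
  obtain ⟨q, hq, hqd⟩ := hgc'.exists_infDist_eq_dist (hgne.smul_set) hv
  obtain ⟨u, hu, rfl⟩ := hp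
  obtain ⟨s, hs, rfl⟩ := hq
  have key : l₁ * ⟪a, u⟫ + l₂ * ⟪b, s⟫ ≤ 0 := by
    have := hab u hu s hs
    have h2 : l₁ * (⟪a, u⟫ + (l₂ / l₁) * ⟪b, s⟫) ≤ 0 :=
      mul_nonpos_of_nonneg_of_nonpos hl₁.le this
    calc l₁ * ⟪a, u⟫ + l₂ * ⟪b, s⟫
        = l₁ * (⟪a, u⟫ + (l₂ / l₁) * ⟪b, s⟫) := by field_simp
      _ ≤ 0 := h2
  have ha : ⟪a, gv⟫ = ⟪a, gv - l₁ • u⟫ + l₁ * ⟪a, u⟫ := by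
    rw [inner_sub_right, real_inner_smul_right]; ring
  have hb : ⟪b, hv⟫ = ⟪b, hv - l₂ • s⟫ + l₂ * ⟪b, s⟫ := by
    rw [inner_sub_right, real_inner_smul_right]; ring
  have ha2 : ⟪a, gv - l₁ • u⟫ ≤ ‖a‖ * Metric.infDist gv (l₁ • subdiffE f xs) := by
    calc ⟪a, gv - l₁ • u⟫ ≤ ‖a‖ * ‖gv - l₁ • u‖ := real_inner_le_norm _ _
      _ = ‖a‖ * Metric.infDist gv (l₁ • subdiffE f xs) := by
          rw [hpd, dist_eq_norm]
  have hb2 : ⟪b, hv - l₂ • s⟫ ≤ ‖b‖ * Metric.infDist hv (l₂ • subdiffE g vs) := by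
    calc ⟪b, hv - l₂ • s⟫ ≤ ‖b‖ * ‖hv - l₂ • s‖ := real_inner_le_norm _ _
      _ = ‖b‖ * Metric.infDist hv (l₂ • subdiffE g vs) := by
          rw [hqd, dist_eq_norm]
  rw [ha, hb]
  linarith
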